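/- Let I = {1,…,κ} with κ ≥ 2, and for each i ∈ I let A_i = [[u_i, v_i],[w_i, z_i]] ∈ ℝ^{2×2} with u_i, v_i, w_i, z_i > 0, A_i invertible and ‖A_i‖ ≤ ᾱ < 1. Suppose the closed intervals [min(w_i/u_i, z_i/v_i), max(w_i/u_i, z_i/v_i)] are pairwise disjoint for i ∈ I. Then, with θ = (1/√2)·(1,1), there exists 0 < β < π/2 such that for all i ∈ I: A_i(cl X(θ,β)) ⊂ X(θ,β) and A_iᵀ(cl X(θ,β)) ⊂ X(θ,β), and A_i(cl X(θ,β)) ∩ A_j(cl X(θ,β)) = {0} whenever i ≠ j. -/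

import Mathlib

open Set Matrix Real

noncomputable section

abbrev E2 := EuclideanSpace ℝ (Fin 2)

/-- the cone X(θ,β) -/
def cone (θ : E2) (β : ℝ) : Set E2 :=
  {x | x ≠ 0 ∧ Real.cos (β / 2) * ‖x‖ < |(inner ℝ θ x : ℝ)|}

/-- the unit vector `(1/√2)·(1,1)` -/
noncomputable def theta : E2 :=
  (Real.sqrt 2)⁻¹ • (EuclideanSpace.single 0 1 + EuclideanSpace.single 1 1)

noncomputable def mLin (A : Matrix (Fin 2) (Fin 2) ℝ) : E2 →L[ℝ] E2 :=
  LinearMap.toContinuousLinearMap (Matrix.toEuclideanLin A)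

/-- largest singular value = operator norm -/
noncomputable def a1 (A : Matrix (Fin 2) (Fin 2) ℝ) : ℝ := ‖mLin A‖

/- ### Auxiliary lemmas -/

lemma euclid_apply (A : Matrix (Fin 2) (Fin 2) ℝ) (x : E2) (k : Fin 2) :
    Matrix.toEuclideanLin A x k = A k 0 * x 0 + A k 1 * x 1 := by
  simp [Matrix.toEuclideanLin_apply, Matrix.mulVec, dotProduct, Fin.sum_univ_two]
  fin_cases k <;> simp

lemma inner_theta (x : E2) : (inner ℝ theta x : ℝ) = (Real.sqrt 2)⁻¹ * (x 0 + x 1) := by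
  simp [theta, real_inner_smul_left, inner_add_left, EuclideanSpace.inner_single_left]
  ring

lemma norm_sq_e2 (x : E2) : ‖x‖^2 = x 0^2 + x 1^2 := by
  rw [EuclideanSpace.norm_eq, Real.sq_sqrt (by positivity)]
  simp [Fin.sum_univ_two, sq_abs]

/-- algebraic characterization of the cone for `0 < β < π/2` -/
lemma cone_char (β : ℝ) (hβ : 0 < β) (hβ' : β < π/2) (x : E2) :
    x ∈ cone theta β ↔ x ≠ 0 ∧ Real.cos β * (x 0^2 + x 1^2) < 2 * (x 0 * x 1) := by
  have hpi : (0:ℝ) < π := Real.pi_pos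
  have hc2 : 0 < Real.cos (β/2) :=
    Real.cos_pos_of_mem_Ioo ⟨by linarith, by linarith⟩
  have hn : (0:ℝ) ≤ Real.cos (β/2) * ‖x‖ := by positivity
  have habs : (0:ℝ) ≤ |(inner ℝ theta x : ℝ)| := abs_nonneg _
  have sqiff : ∀ a b : ℝ, 0 ≤ a → 0 ≤ b → (a < b ↔ a^2 < b^2) := by
    intro a b ha hb
    constructor
    · intro h; nlinarith
    · intro h; nlinarith
  have h2 : ((Real.sqrt 2)⁻¹ * (x 0 + x 1))^2 = (x 0 + x 1)^2 / 2 := by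
    rw [mul_pow, inv_pow, Real.sq_sqrt (by norm_num : (0:ℝ) ≤ 2)]
    ring
  constructor
  · rintro ⟨hx0, hx⟩
    refine ⟨hx0, ?_⟩
    have := (sqiff _ _ hn habs).1 hx
    rw [mul_pow, norm_sq_e2, sq_abs, inner_theta, Real.cos_sq, h2,
      show 2*(β/2) = β by ring] at this
    nlinarith
  · rintro ⟨hx0, hx⟩
    refine ⟨hx0, ?_⟩
    rw [sqiff _ _ hn habs, mul_pow, norm_sq_e2, sq_abs, inner_theta, Real.cos_sq,
      show 2*(β/2) = β by ring, h2]
    nlinarith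

/-- core quantitative inequality -/
lemma core_ineq (m M a b c d X Y : ℝ) (hm : 0 < m)
    (h1 : m ≤ a) (h2 : m ≤ b) (h3 : m ≤ c) (h4 : m ≤ d)
    (g1 : a ≤ M) (g2 : b ≤ M) (g3 : c ≤ M) (g4 : d ≤ M)
    (hX : 0 < X) (hY : 0 < Y) :
    m^2/(2*M^2) * ((a*X+b*Y)^2 + (c*X+d*Y)^2) < 2*((a*X+b*Y)*(c*X+d*Y)) := by
  have hM : 0 < M := lt_of_lt_of_le hm (le_trans h1 g1)
  have hXY : 0 < X + Y := by linarith
  have hy0l : m*(X+Y) ≤ a*X+b*Y := by nlinarith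
  have hy0u : a*X+b*Y ≤ M*(X+Y) := by nlinarith
  have hy1l : m*(X+Y) ≤ c*X+d*Y := by nlinarith
  have hy1u : c*X+d*Y ≤ M*(X+Y) := by nlinarith
  have h0 : (0:ℝ) ≤ m*(X+Y) := by positivity
  rw [div_mul_eq_mul_div, div_lt_iff₀ (by positivity)]
  have e0 : (a*X+b*Y)^2 ≤ (M*(X+Y))^2 := pow_le_pow_left₀ (le_trans h0 hy0l) hy0u 2
  have e1 : (c*X+d*Y)^2 ≤ (M*(X+Y))^2 := pow_le_pow_left₀ (le_trans h0 hy1l) hy1u 2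
  have e2 : (m*(X+Y))*(m*(X+Y)) ≤ (a*X+b*Y)*(c*X+d*Y) :=
    mul_le_mul hy0l hy1l h0 (le_trans h0 hy0l)
  have hpos : (0:ℝ) < (m*M*(X+Y))^2 := by positivity
  nlinarith [mul_le_mul_of_nonneg_left (add_le_add e0 e1) (sq_nonneg m),
    mul_le_mul_of_nonneg_left e2 (by positivity : (0:ℝ) ≤ 4*M^2), hpos]

set_option maxHeartbeats 2000000 in
/-- (X1) ⟹ (K1) -/
theorem slope_condition_implies_kakeya_cones (κ : ℕ) (hκ : 2 ≤ κ)
    (A : Fin κ → Matrix (Fin 2) (Fin 2) ℝ) (u v w z : Fin κ → ℝ)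
    (hu : ∀ i, 0 < u i) (hv : ∀ i, 0 < v i) (hw : ∀ i, 0 < w i) (hz : ∀ i, 0 < z i)
    (hA : ∀ i, A i = !![u i, v i; w i, z i])
    (hinv : ∀ i, IsUnit (A i).det) (ᾱ : ℝ) (hᾱ : ᾱ < 1) (hnorm : ∀ i, a1 (A i) ≤ ᾱ)
    (hdisj : ∀ i j, i ≠ j →
      Set.Icc (min (w i / u i) (z i / v i)) (max (w i / u i) (z i / v i)) ∩
      Set.Icc (min (w j / u j) (z j / v j)) (max (w j / u j) (z j / v j)) = ∅) :
    ∃ β : ℝ, 0 < β ∧ β < π / 2 ∧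
      (∀ i, ∀ x ∈ closure (cone theta β), x ≠ 0 →
        Matrix.toEuclideanLin (A i) x ∈ cone theta β) ∧
      (∀ i, ∀ x ∈ closure (cone theta β), x ≠ 0 →
        Matrix.toEuclideanLin (A i)ᵀ x ∈ cone theta β) ∧
      (∀ i j, i ≠ j →
        (Matrix.toEuclideanLin (A i) '' closure (cone theta β)) ∩
          (Matrix.toEuclideanLin (A j) '' closure (cone theta β)) = {0}) := by
  have hκ0 : 0 < κ := by omega
  set i₀ : Fin κ := ⟨0, hκ0⟩ with hi₀
  -- minimal and maximal entries
  obtain ⟨im, -, hmin⟩ := Finset.exists_min_image Finset.univ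
    (fun i => min (min (u i) (v i)) (min (w i) (z i))) ⟨i₀, Finset.mem_univ i₀⟩
  obtain ⟨iM, -, hmax⟩ := Finset.exists_max_image Finset.univ
    (fun i => max (max (u i) (v i)) (max (w i) (z i))) ⟨i₀, Finset.mem_univ i₀⟩
  set m : ℝ := min (min (u im) (v im)) (min (w im) (z im)) with hmdef
  set M : ℝ := max (max (u iM) (v iM)) (max (w iM) (z iM)) with hMdef
  have hm : 0 < m := by
    simp only [hmdef, lt_min_iff]
    exact ⟨⟨hu im, hv im⟩, hw im, hz im⟩
  have hlow : ∀ i, m ≤ u i ∧ m ≤ v i ∧ m ≤ w i ∧ m ≤ z i := by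
    intro i
    have h := hmin i (Finset.mem_univ i)
    exact ⟨le_trans h (le_trans (min_le_left _ _) (min_le_left _ _)),
      le_trans h (le_trans (min_le_left _ _) (min_le_right _ _)),
      le_trans h (le_trans (min_le_right _ _) (min_le_left _ _)),
      le_trans h (le_trans (min_le_right _ _) (min_le_right _ _))⟩
  have hhigh : ∀ i, u i ≤ M ∧ v i ≤ M ∧ w i ≤ M ∧ z i ≤ M := by
    intro i
    have h := hmax i (Finset.mem_univ i)
    exact ⟨le_trans (le_trans (le_max_left _ _) (le_max_left _ _)) h,
      le_trans (le_trans (le_max_right _ _) (le_max_left _ _)) h,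
      le_trans (le_trans (le_max_left _ _) (le_max_right _ _)) h,
      le_trans (le_trans (le_max_right _ _) (le_max_right _ _)) h⟩
  have hM : 0 < M := lt_of_lt_of_le (hu i₀) (hhigh i₀).1
  have hmM : m ≤ M := le_trans (hlow i₀).1 (hhigh i₀).1
  set c : ℝ := m^2/(2*M^2) with hcdef
  have hc0 : 0 < c := by positivity
  have hc1 : c ≤ 1/2 := by
    rw [hcdef, div_le_iff₀ (by positivity)]
    nlinarith
  set β : ℝ := Real.arccos c with hβdef
  have hcos : Real.cos β = c := Real.cos_arccos (by linarith) (by linarith)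
  have hβ0 : 0 < β := Real.arccos_pos.2 (by linarith)
  have hβ2 : β < π/2 := Real.arccos_lt_pi_div_two.2 hc0
  -- closure of cone is contained in the closed algebraic cone
  have hScl : ∀ x ∈ closure (cone theta β),
      Real.cos β * (x 0^2 + x 1^2) ≤ 2 * (x 0 * x 1) := by
    have hcont : ∀ i : Fin 2, Continuous fun y : E2 => y i :=
      fun i => (EuclideanSpace.proj i).continuous
    have hcl : IsClosed {y : E2 | Real.cos β * (y 0^2 + y 1^2) ≤ 2 * (y 0 * y 1)} := by
      apply isClosed_le
      · exact continuous_const.mul (((hcont 0).pow 2).add ((hcont 1).pow 2))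
      · exact continuous_const.mul ((hcont 0).mul (hcont 1))
    intro x hx
    refine closure_minimal ?_ hcl hx
    intro y hy
    exact le_of_lt ((cone_char β hβ0 hβ2 y).1 hy).2
  -- sign dichotomy
  have hsign : ∀ x : E2, x ≠ 0 → Real.cos β * (x 0^2 + x 1^2) ≤ 2 * (x 0 * x 1) →
      (0 < x 0 ∧ 0 < x 1) ∨ (x 0 < 0 ∧ x 1 < 0) := by
    intro x hx0 hx
    have hs : 0 < x 0^2 + x 1^2 := by
      rcases eq_or_lt_of_le (by positivity : (0:ℝ) ≤ x 0^2 + x 1^2) with h | h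
      · exfalso
        apply hx0
        have h0 : x 0 = 0 := by nlinarith [sq_nonneg (x 0), sq_nonneg (x 1)]
        have h1 : x 1 = 0 := by nlinarith [sq_nonneg (x 0), sq_nonneg (x 1)]
        ext i
        fin_cases i
        · exact h0
        · exact h1
      · exact h
    have hxy : 0 < x 0 * x 1 := by
      rw [hcos] at hx
      nlinarith
    exact mul_pos_iff.1 hxy
  -- entries
  have hent : ∀ i, (A i) 0 0 = u i ∧ (A i) 0 1 = v i ∧ (A i) 1 0 = w i ∧ (A i) 1 1 = z i := by
    intro i
    rw [hA i]
    refine ⟨rfl, rfl, rfl, rfl⟩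
  -- generic mapping lemma
  have hmap : ∀ a b a' b' : ℝ, m ≤ a → a ≤ M → m ≤ b → b ≤ M → m ≤ a' → a' ≤ M →
      m ≤ b' → b' ≤ M →
      ∀ x : E2, x ≠ 0 → Real.cos β * (x 0^2 + x 1^2) ≤ 2 * (x 0 * x 1) →
      ∀ y : E2, y 0 = a * x 0 + b * x 1 → y 1 = a' * x 0 + b' * x 1 →
      y ∈ cone theta β := by
    intro a b a' b' ha1 ha2 hb1 hb2 ha'1 ha'2 hb'1 hb'2 x hx0 hx y hy0 hy1
    rcases hsign x hx0 hx with ⟨hp0, hp1⟩ | ⟨hn0, hn1⟩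
    · have key := core_ineq m M a b a' b' (x 0) (x 1) hm ha1 hb1 ha'1 hb'1 ha2 hb2 ha'2 hb'2 hp0 hp1
      have hy0pos : 0 < y 0 := by rw [hy0]; nlinarith
      refine (cone_char β hβ0 hβ2 y).2 ⟨?_, ?_⟩
      · intro h
        rw [h] at hy0pos
        simp at hy0pos
      · rw [hcos, hy0, hy1]
        exact key
    · have hX : 0 < -x 0 := by linarith
      have hY : 0 < -x 1 := by linarith
      have key := core_ineq m M a b a' b' (-x 0) (-x 1) hm ha1 hb1 ha'1 hb'1 ha2 hb2 ha'2 hb'2 hX hY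
      have hy0neg : y 0 < 0 := by rw [hy0]; nlinarith
      refine (cone_char β hβ0 hβ2 y).2 ⟨?_, ?_⟩
      · intro h
        rw [h] at hy0neg
        simp at hy0neg
      · rw [hcos, hy0, hy1]
        nlinarith [key]
  -- ratio lemma for separation
  have hratio : ∀ (i : Fin κ) (x : E2), x ≠ 0 →
      Real.cos β * (x 0^2 + x 1^2) ≤ 2 * (x 0 * x 1) →
      (Matrix.toEuclideanLin (A i) x 1) / (Matrix.toEuclideanLin (A i) x 0) ∈
        Set.Icc (min (w i / u i) (z i / v i)) (max (w i / u i) (z i / v i)) := by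
    intro i x hx0 hx
    obtain ⟨e00, e01, e10, e11⟩ := hent i
    have hp0 : Matrix.toEuclideanLin (A i) x 0 = u i * x 0 + v i * x 1 := by
      rw [euclid_apply, e00, e01]
    have hp1 : Matrix.toEuclideanLin (A i) x 1 = w i * x 0 + z i * x 1 := by
      rw [euclid_apply, e10, e11]
    have huv : 0 < u i := hu i
    have hvv : 0 < v i := hv i
    have hkey : ∀ X Y : ℝ, 0 < X → 0 < Y →
        (w i * X + z i * Y) / (u i * X + v i * Y) ∈
          Set.Icc (min (w i / u i) (z i / v i)) (max (w i / u i) (z i / v i)) := by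
      intro X Y hX hY
      have hden : 0 < u i * X + v i * Y := by positivity
      have l1 : min (w i / u i) (z i / v i) * (u i * X) ≤ w i * X := by
        calc min (w i / u i) (z i / v i) * (u i * X)
            ≤ (w i / u i) * (u i * X) :=
              mul_le_mul_of_nonneg_right (min_le_left _ _) (by positivity)
          _ = w i * X := by field_simp
      have l2 : min (w i / u i) (z i / v i) * (v i * Y) ≤ z i * Y := by
        calc min (w i / u i) (z i / v i) * (v i * Y)
            ≤ (z i / v i) * (v i * Y) :=
              mul_le_mul_of_nonneg_right (min_le_right _ _) (by positivity)
          _ = z i * Y := by field_simp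
      have r1 : w i * X ≤ max (w i / u i) (z i / v i) * (u i * X) := by
        calc w i * X = (w i / u i) * (u i * X) := by field_simp
          _ ≤ max (w i / u i) (z i / v i) * (u i * X) :=
              mul_le_mul_of_nonneg_right (le_max_left _ _) (by positivity)
      have r2 : z i * Y ≤ max (w i / u i) (z i / v i) * (v i * Y) := by
        calc z i * Y = (z i / v i) * (v i * Y) := by field_simp
          _ ≤ max (w i / u i) (z i / v i) * (v i * Y) :=
              mul_le_mul_of_nonneg_right (le_max_right _ _) (by positivity)
      constructor
      · rw [le_div_iff₀ hden]
        nlinarith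
      · rw [div_le_iff₀ hden]
        nlinarith
    rcases hsign x hx0 hx with ⟨hpx0, hpx1⟩ | ⟨hnx0, hnx1⟩
    · rw [hp0, hp1]
      exact hkey _ _ hpx0 hpx1
    · rw [hp0, hp1,
        show (w i * x 0 + z i * x 1) / (u i * x 0 + v i * x 1)
          = (w i * (-x 0) + z i * (-x 1)) / (u i * (-x 0) + v i * (-x 1)) by
          rw [← neg_div_neg_eq]; ring_nf]
      exact hkey _ _ (by linarith) (by linarith)
  -- zero is in the closure
  have h0cl : (0:E2) ∈ closure (cone theta β) := by
    set d : E2 := EuclideanSpace.single 0 1 + EuclideanSpace.single 1 1 with hd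
    have hd0 : d 0 = 1 := by simp [hd, EuclideanSpace.single_apply]
    have hd1 : d 1 = 1 := by simp [hd, EuclideanSpace.single_apply]
    have htend : Filter.Tendsto (fun n : ℕ => (1/((n:ℝ)+1)) • d) Filter.atTop (nhds 0) := by
      have := (tendsto_one_div_add_atTop_nhds_zero_nat (𝕜 := ℝ)).smul_const d
      simpa using this
    refine mem_closure_of_tendsto htend (Filter.Eventually.of_forall ?_)
    intro n
    have ht : 0 < 1/((n:ℝ)+1) := by positivity
    set t : ℝ := 1/((n:ℝ)+1)
    have hc0' : ((t • d : E2) : E2) 0 = t := by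
      simp [PiLp.smul_apply, hd0]
    have hc1' : ((t • d : E2) : E2) 1 = t := by
      simp [PiLp.smul_apply, hd1]
    refine (cone_char β hβ0 hβ2 _).2 ⟨?_, ?_⟩
    · intro h
      have : ((t • d : E2) : E2) 0 = 0 := by rw [h]; simp
      rw [hc0'] at this
      linarith
    · rw [hc0', hc1', hcos]
      nlinarith
  refine ⟨β, hβ0, hβ2, ?_, ?_, ?_⟩
  · -- (K1a)
    intro i x hx hxne
    obtain ⟨e00, e01, e10, e11⟩ := hent i
    obtain ⟨h1, h2, h3, h4⟩ := hlow i
    obtain ⟨g1, g2, g3, g4⟩ := hhigh i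
    exact hmap (u i) (v i) (w i) (z i) h1 g1 h2 g2 h3 g3 h4 g4 x hxne (hScl x hx) _
      (by rw [euclid_apply, e00, e01]) (by rw [euclid_apply, e10, e11])
  · -- (K1b)
    intro i x hx hxne
    obtain ⟨e00, e01, e10, e11⟩ := hent i
    obtain ⟨h1, h2, h3, h4⟩ := hlow i
    obtain ⟨g1, g2, g3, g4⟩ := hhigh i
    refine hmap (u i) (w i) (v i) (z i) h1 g1 h3 g3 h2 g2 h4 g4 x hxne (hScl x hx) _
      ?_ ?_
    · rw [euclid_apply]
      rw [Matrix.transpose_apply, Matrix.transpose_apply, e00, e10]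
    · rw [euclid_apply]
      rw [Matrix.transpose_apply, Matrix.transpose_apply, e01, e11]
  · -- (K1c)
    intro i j hij
    ext p
    simp only [Set.mem_inter_iff, Set.mem_image, Set.mem_singleton_iff]
    constructor
    · rintro ⟨⟨x, hx, rfl⟩, ⟨x', hx', hpe⟩⟩
      by_contra hp
      have hxne : x ≠ 0 := by
        intro h
        apply hp
        rw [h]
        exact map_zero _
      have hx'ne : x' ≠ 0 := by
        intro h
        apply hp
        rw [← hpe, h]
        exact map_zero _
      have r1 := hratio i x hxne (hScl x hx)
      have r2 := hratio j x' hx'ne (hScl x' hx')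
      rw [hpe] at r2
      have := hdisj i j hij
      rw [Set.eq_empty_iff_forall_notMem] at this
      exact this _ ⟨r1, r2⟩
    · rintro rfl
      exact ⟨⟨0, h0cl, map_zero _⟩, ⟨0, h0cl, map_zero _⟩⟩

end
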